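/- Let T be a Lie algebra over F and Φ : L → T a Lie algebra homomorphism from the free Lie algebra L on generators α, β. Suppose that (i) the family consisting of Φ(β) together with the elements Φ((-ad β)^n(α)) for all n ∈ ℕ is a basis of T (it is linearly independent and spans T as an F-vector space), and (ii) [Φ(α), Φ((-ad β)^n(α))] = 0 for every n ∈ ℕ. Then the kernel of Φ equals the Lie ideal of L generated by the elements (ad α)((-ad β)^n(α)) for all integers n ≥ 1. -/

import Mathlib

noncomputable section

/-- The free Lie algebra on two generators. -/
abbrev FL (F : Type) [Field F] := FreeLieAlgebra F (Fin 2)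

/-- The generator `α`. -/
def FL.α (F : Type) [Field F] : FL F := FreeLieAlgebra.of F 0

/-- The generator `β`. -/
def FL.β (F : Type) [Field F] : FL F := FreeLieAlgebra.of F 1

/-- `(-ad β)^n (α)`, noting `(-ad β)(y) = -⁅β, y⁆ = ⁅y, β⁆`. -/
def FL.negAdBetaPowAlpha (F : Type) [Field F] (n : ℕ) : FL F :=
  (fun y => ⁅y, FL.β F⁆)^[n] (FL.α F)

lemma FL.negAdBetaPowAlpha_zero (F : Type) [Field F] :
    FL.negAdBetaPowAlpha F 0 = FL.α F := rfl

lemma FL.negAdBetaPowAlpha_succ (F : Type) [Field F] (n : ℕ) :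
    FL.negAdBetaPowAlpha F (n + 1) = ⁅FL.negAdBetaPowAlpha F n, FL.β F⁆ := by
  simp [FL.negAdBetaPowAlpha, Function.iterate_succ_apply']

/-- If `Φ : L → T` is a Lie algebra homomorphism such that the family consisting of
`Φ(β)` together with all `Φ((-ad β)^n(α))` is a basis of `T`, and `Φ(α)` commutes with
every `Φ((-ad β)^n(α))`, then `ker Φ` is the Lie ideal generated by the elements
`(ad α)((-ad β)^n(α))`, `n ≥ 1`. -/
theorem ker_eq_lie_ideal_of_basis (F : Type) [Field F]
    (T : Type) [LieRing T] [LieAlgebra F T] (Φ : FL F →ₗ⁅F⁆ T)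
    (hli : LinearIndependent F fun o : Option ℕ =>
      o.elim (Φ (FL.β F)) fun n => Φ (FL.negAdBetaPowAlpha F n))
    (hspan : Submodule.span F (Set.range fun o : Option ℕ =>
      o.elim (Φ (FL.β F)) fun n => Φ (FL.negAdBetaPowAlpha F n)) = ⊤)
    (hcomm : ∀ n : ℕ, ⁅Φ (FL.α F), Φ (FL.negAdBetaPowAlpha F n)⁆ = 0) :
    Φ.ker = LieSubmodule.lieSpan F (FL F)
      {x | ∃ n : ℕ, 1 ≤ n ∧ x = ⁅FL.α F, FL.negAdBetaPowAlpha F n⁆} := by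
  set X : ℕ → FL F := FL.negAdBetaPowAlpha F with hX
  set I : LieIdeal F (FL F) := LieSubmodule.lieSpan F (FL F)
      {x | ∃ n : ℕ, 1 ≤ n ∧ x = ⁅FL.α F, FL.negAdBetaPowAlpha F n⁆} with hI
  -- generators of I
  have hgen : ∀ n : ℕ, 1 ≤ n → ⁅FL.α F, X n⁆ ∈ I := fun n hn =>
    LieSubmodule.subset_lieSpan ⟨n, hn, rfl⟩
  -- key combinatorial lemma: all brackets of the X's lie in I
  have hxx : ∀ m n : ℕ, ⁅X m, X n⁆ ∈ I := by
    intro m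
    induction m with
    | zero =>
      intro n
      match n with
      | 0 => simp [hX, FL.negAdBetaPowAlpha_zero]
      | n + 1 => exact hgen (n + 1) (Nat.succ_le_succ (Nat.zero_le n))
    | succ m ih =>
      intro n
      have h1 : X (m + 1) = ⁅X m, FL.β F⁆ := FL.negAdBetaPowAlpha_succ F m
      have h2 : ⁅FL.β F, X n⁆ = -X (n + 1) := by
        show ⁅FL.β F, FL.negAdBetaPowAlpha F n⁆ = -FL.negAdBetaPowAlpha F (n + 1)
        rw [FL.negAdBetaPowAlpha_succ F n]; exact (lie_skew _ _).symm
      rw [h1, lie_lie, h2, lie_neg]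
      exact sub_mem (neg_mem (ih (n + 1))) (I.lie_mem (ih n))
  -- the family
  set f : Option ℕ → FL F := fun o => o.elim (FL.β F) X with hf
  set S : Submodule F (FL F) := Submodule.span F (Set.range f) ⊔ (I : Submodule F (FL F))
    with hS
  -- S is closed under brackets
  have hbr : ∀ a ∈ S, ∀ b ∈ S, ⁅a, b⁆ ∈ S := by
    have key : ∀ a ∈ Submodule.span F (Set.range f),
        ∀ b ∈ Submodule.span F (Set.range f), ⁅a, b⁆ ∈ S := by
      intro a ha
      induction ha using Submodule.span_induction with
      | mem a hamem =>
        intro b hb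
        induction hb using Submodule.span_induction with
        | mem b hbmem =>
          obtain ⟨o, rfl⟩ := hamem
          obtain ⟨o', rfl⟩ := hbmem
          match o, o' with
          | none, none => simp
          | none, some n =>
            have : ⁅f none, f (some n)⁆ = -X (n + 1) := by
              show ⁅FL.β F, FL.negAdBetaPowAlpha F n⁆ = -FL.negAdBetaPowAlpha F (n + 1)
              rw [FL.negAdBetaPowAlpha_succ F n]; exact (lie_skew _ _).symm
            rw [this]
            exact le_sup_left (α := Submodule F (FL F))
              (neg_mem (Submodule.subset_span ⟨some (n + 1), rfl⟩))
          | some n, none =>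
            have : ⁅f (some n), f none⁆ = X (n + 1) :=
              (FL.negAdBetaPowAlpha_succ F n).symm
            rw [this]
            exact le_sup_left (α := Submodule F (FL F))
              (Submodule.subset_span ⟨some (n + 1), rfl⟩)
          | some m, some n =>
            exact le_sup_right (α := Submodule F (FL F)) (hxx m n)
        | zero => simp
        | add y z _ _ hy hz => rw [lie_add]; exact add_mem hy hz
        | smul c y _ hy => rw [lie_smul]; exact Submodule.smul_mem _ c hy
      | zero => intro b hb; simp
      | add y z _ _ hy hz =>
        intro b hb; rw [add_lie]; exact add_mem (hy b hb) (hz b hb)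
      | smul c y _ hy =>
        intro b hb; rw [smul_lie]; exact Submodule.smul_mem _ c (hy b hb)
    intro a ha b hb
    rw [hS, Submodule.mem_sup] at ha hb
    obtain ⟨sa, hsa, ia, hia, rfl⟩ := ha
    obtain ⟨sb, hsb, ib, hib, rfl⟩ := hb
    rw [lie_add, add_lie, add_lie]
    refine add_mem (add_mem (key sa hsa sb hsb) ?_) (add_mem ?_ ?_)
    · exact le_sup_right (α := Submodule F (FL F))
        (by rw [← lie_skew]; exact neg_mem (I.lie_mem hia))
    · exact le_sup_right (α := Submodule F (FL F)) (I.lie_mem hib)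
    · exact le_sup_right (α := Submodule F (FL F)) (I.lie_mem hib)
  -- S contains the generators of the free Lie algebra
  have hof : ∀ i : Fin 2, FreeLieAlgebra.of F i ∈ S := by
    intro i
    fin_cases i
    · exact le_sup_left (α := Submodule F (FL F))
        (Submodule.subset_span ⟨some 0, rfl⟩)
    · exact le_sup_left (α := Submodule F (FL F))
        (Submodule.subset_span ⟨none, rfl⟩)
  -- hence S = ⊤
  have hStop : ∀ z : FL F, z ∈ S := by
    let K : LieSubalgebra F (FL F) :=
      { toSubmodule := S
        lie_mem' := fun {a b} ha hb => hbr a ha b hb }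
    let h : FL F →ₗ⁅F⁆ K := FreeLieAlgebra.lift F fun i => ⟨FreeLieAlgebra.of F i, hof i⟩
    have : K.incl.comp h = LieHom.id := by
      apply FreeLieAlgebra.hom_ext
      intro x
      simp [h, FreeLieAlgebra.lift_of_apply, LieSubalgebra.coe_incl]
    intro z
    have hz : K.incl (h z) = z := by
      have := congrArg (fun g : FL F →ₗ⁅F⁆ FL F => g z) this
      simpa using this
    rw [← hz]
    exact (h z).2
  -- I ≤ ker Φ
  have hIker : I ≤ Φ.ker := by
    rw [hI, LieSubmodule.lieSpan_le]
    rintro _ ⟨n, hn, rfl⟩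
    rw [SetLike.mem_coe, LieHom.mem_ker, LieHom.map_lie]
    exact hcomm n
  -- conclude
  apply le_antisymm _ hIker
  intro z hz
  have hzS := hStop z
  rw [hS, Submodule.mem_sup] at hzS
  obtain ⟨s, hs, i, hi, rfl⟩ := hzS
  have hΦi : Φ i = 0 := hIker hi
  have hΦs : Φ s = 0 := by
    have := LieHom.mem_ker.mp hz
    rw [map_add, hΦi, add_zero] at this
    exact this
  -- s is a finsupp combination of the f's
  rw [Finsupp.mem_span_range_iff_exists_finsupp] at hs
  obtain ⟨c, rfl⟩ := hs
  have hc : c = 0 := by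
    apply linearIndependent_iff.mp hli
    rw [Finsupp.linearCombination_apply, Finsupp.sum]
    rw [Finsupp.sum, ← LieHom.coe_toLinearMap, map_sum] at hΦs
    rw [← hΦs]
    apply Finset.sum_congr rfl
    intro o _
    rw [LinearMap.map_smul, LieHom.coe_toLinearMap]
    cases o <;> rfl
  rw [hc]
  simpa using hi
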